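/- arXiv:1904.04979 — 3 statements merged into one kernel-verified Lean document; each statement's English description precedes it below -/
import Mathlib

section
/- Let G be a finite group, M a monoid functor for G, and H ≤ G. For (K,s),(U,t) ∈ S(H,M), the elements (H/K, π_s) and (H/U, π_t) are isomorphic as elements of T^M_H if and only if (K,s) = h.(U,t) for some h ∈ H; consequently, the classes [(H/K)_s] for (K,s) ∈ R(H,M) form a Z-basis of the M-Burnside ring Ω(H,M). -/
set_option linter.unusedSectionVars false
set_option linter.unusedVariables false

open scoped Classical

namespace LB
noncomputable section

variable {G : Type*} [Group G]

def conjS (g : G) (K : Subgroup G) : Subgroup G :=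
  K.map ((MulAut.conj g).toMonoidHom)

theorem mem_conjS {g x : G} {K : Subgroup G} : x ∈ conjS g K ↔ g⁻¹ * x * g ∈ K := by
  unfold conjS
  rw [Subgroup.mem_map]
  constructor
  · rintro ⟨y, hy, rfl⟩
    have h2 : g⁻¹ * ((MulAut.conj g).toMonoidHom y) * g = y := by
      simp only [MulEquiv.coe_toMonoidHom, MulAut.conj_apply]; group
    rw [h2]; exact hy
  · intro h
    refine ⟨g⁻¹ * x * g, h, ?_⟩
    simp only [MulEquiv.coe_toMonoidHom, MulAut.conj_apply]; group

theorem conjS_mono (g : G) {K K' : Subgroup G} (h : K ≤ K') : conjS g K ≤ conjS g K' :=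
  Subgroup.map_mono h


/-- The Möbius function of a finite partial order. -/
noncomputable def mob {α : Type*} [PartialOrder α] [Finite α] (a b : α) : ℤ :=
  letI : Fintype α := Fintype.ofFinite α
  letI : @DecidableRel α α (· < ·) := Classical.decRel _
  letI : LocallyFiniteOrder α := Fintype.toLocallyFiniteOrder
  IncidenceAlgebra.mu ℤ a b

/-- A monoid functor for `G` (Definition 2.2 of the paper). -/
structure MonoidFunctor (G : Type*) [Group G] where
  M : Subgroup G → Type*
  instM : ∀ K, Monoid (M K)
  con : ∀ (g : G) (K : Subgroup G), M K →* M (conjS g K)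
  res : ∀ {K H : Subgroup G}, K ≤ H → (M H →* M K)
  con_mul : ∀ (g r : G) (K : Subgroup G) (s : M K),
    (⟨conjS g (conjS r K), con g (conjS r K) (con r K s)⟩ : Σ K : Subgroup G, M K)
      = ⟨conjS (g * r) K, con (g * r) K s⟩
  con_id : ∀ (K : Subgroup G) (h : G), h ∈ K → ∀ s : M K,
    (⟨conjS h K, con h K s⟩ : Σ K : Subgroup G, M K) = ⟨K, s⟩
  res_res : ∀ {L K H : Subgroup G} (hLK : L ≤ K) (hKH : K ≤ H) (s : M H),
    res hLK (res hKH s) = res (hLK.trans hKH) s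
  res_self : ∀ (H : Subgroup G) (s : M H), res le_rfl s = s
  con_res : ∀ (g : G) {K H : Subgroup G} (hKH : K ≤ H) (s : M H),
    con g K (res hKH s) = res (conjS_mono g hKH) (con g H s)

attribute [instance] MonoidFunctor.instM

variable (Mf : MonoidFunctor G)

/-- The disjoint union of the monoids `M K`. -/
abbrev Sig (Mf : MonoidFunctor G) := Σ K : Subgroup G, Mf.M K

/-- The conjugation action on pairs `(K, s)`. -/
def dot (g : G) (x : Sig Mf) : Sig Mf := ⟨conjS g x.1, Mf.con g x.1 x.2⟩

theorem dot_one (x : Sig Mf) : dot Mf 1 x = x := Mf.con_id x.1 1 (one_mem _) x.2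

theorem dot_mul (g r : G) (x : Sig Mf) : dot Mf g (dot Mf r x) = dot Mf (g * r) x :=
  Mf.con_mul g r x.1 x.2

/-- `N_H(K,s)`, the stabilizer in `H` of the pair `(K,s)`. -/
def NGpair (H : Subgroup G) (x : Sig Mf) : Subgroup G where
  carrier := {g | g ∈ H ∧ dot Mf g x = x}
  one_mem' := ⟨H.one_mem, dot_one Mf x⟩
  mul_mem' := by
    rintro a b ⟨ha, da⟩ ⟨hb, db⟩
    exact ⟨H.mul_mem ha hb, by rw [← dot_mul, db, da]⟩
  inv_mem' := by
    rintro a ⟨ha, da⟩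
    refine ⟨H.inv_mem ha, ?_⟩
    conv_lhs => rw [← da]
    rw [dot_mul, inv_mul_cancel, dot_one]

/-- A complete set of representatives `R(H,M)` of the `H`-orbits of the set `S(H,M)` of
pairs `(K,s)` with `K ≤ H` and `s ∈ M(K)`. -/
structure Reps (Mf : MonoidFunctor G) (H : Subgroup G) where
  R : Set (Sig Mf)
  subset : ∀ x ∈ R, x.1 ≤ H
  complete : ∀ x : Sig Mf, x.1 ≤ H → ∃! y, y ∈ R ∧ ∃ h ∈ H, dot Mf h x = y

variable {H : Subgroup G}

/-- The coordinate of a tuple indexed by `R(H,M)` at (the orbit of) an arbitrary pair. -/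
def coordAt {A : Type*} [AddCommMonoid A] (R : Reps Mf H) (v : ↥R.R → A) (y : Sig Mf) : A :=
  ∑ᶠ (k : ↥R.R) (_ : ∃ h ∈ H, dot Mf h y = ↑k), v k

/-- The number of cosets `hK ∈ H/K` with `U ≤ ʰK` and `t = res(ʰs)`,
for `x = (K,s)` and `u = (U,t)`. -/
def invCount (H : Subgroup G) (x u : Sig Mf) : ℕ :=
  Nat.card {q : ↥H ⧸ x.1.subgroupOf H //
    ∃ h : ↥H, QuotientGroup.mk h = q ∧
      ∃ hle : u.1 ≤ conjS (h : G) x.1, u.2 = Mf.res hle (Mf.con (h : G) x.1 x.2)}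

/-- The mark morphism `φ_H` in coordinates. -/
def phiM (R : Reps Mf H) (f : ↥R.R → ℤ) : ↥R.R → ℤ :=
  fun u => ∑ᶠ k : ↥R.R, f k * (invCount Mf H k.1 u.1 : ℤ)

/-- `|W_H(K,s)| = |N_H(K,s)/K|`. -/
def WCard (H : Subgroup G) (x : Sig Mf) : ℕ := (x.1.subgroupOf (NGpair Mf H x)).index

/-- The order of a Sylow `p`-subgroup of a group of order `n`; for `p = 0`
(representing `p = ∞`) it is `n` itself. -/
def sylCard (p n : ℕ) : ℕ := if p = 0 then n else p ^ (n.factorization p)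

/-- The multiplicative set `ℤ ∖ (p)` (for `p` prime), resp. the units of `ℤ` (for `p = 0`,
representing `p = ∞`), so that `Localization (locMon p hp)` is `ℤ_(p)`, resp. `ℤ`. -/
def locMon (p : ℕ) (hp : p = 0 ∨ p.Prime) : Submonoid ℤ where
  carrier := {k | if p = 0 then IsUnit k else ¬ (p : ℤ) ∣ k}
  one_mem' := by
    rcases hp with h | h
    · simp [h]
    · simp only [Set.mem_setOf_eq, if_neg h.ne_zero]
      intro hd
      exact h.one_lt.ne' (by exact_mod_cast Int.eq_one_of_dvd_one (by positivity) hd)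
  mul_mem' := by
    intro a b ha hb
    rcases hp with h | h
    · simp only [Set.mem_setOf_eq, if_pos h] at *
      exact ha.mul hb
    · simp only [Set.mem_setOf_eq, if_neg h.ne_zero] at *
      intro hd
      rcases ((Nat.prime_iff_prime_int.mp h).dvd_mul.mp hd) with h1 | h1
      · exact ha h1
      · exact hb h1

/-- `ℤ_(p)` (with `ℤ_(0)` interpreted as `ℤ_(∞) = ℤ`). -/
abbrev Zp (p : ℕ) (hp : p = 0 ∨ p.Prime) := Localization (locMon p hp)


end

universe u v

noncomputable section

variable {G : Type u} [Group G] (Mf : MonoidFunctor G) {H : Subgroup G}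

theorem conjS_le {g : G} {K H : Subgroup G} (hK : K ≤ H) (hg : g ∈ H) : conjS g K ≤ H := by
  intro x hx
  rw [mem_conjS] at hx
  have h2 := H.mul_mem (H.mul_mem hg (hK hx)) (H.inv_mem hg)
  convert h2 using 1
  group

/-- A pair `(J, π)` of a finite `H`-set `J` and a map `π : J → ⊔_{K ≤ H} M(K)`;
the axioms of an element of `T^M_H` are collected in `IsElt` below. -/
structure PreElt (Mf : MonoidFunctor G) (H : Subgroup G) where
  J : Type u
  fin : Finite J
  act : ↥H → J → J
  pi : J → Sig Mf

/-- The stabilizer (as a subset of `G`) of a point of a pre-element. -/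
def stabSet (A : PreElt Mf H) (x : A.J) : Set G :=
  {g | ∃ hg : g ∈ H, A.act ⟨g, hg⟩ x = x}

/-- `(J, π)` is an element of `T^M_H`: the action axioms hold, `π` is `H`-equivariant,
and `π(x) ∈ M(H_x)` where `H_x` is the stabilizer of `x` in `H`. -/
def IsElt (A : PreElt Mf H) : Prop :=
  (∀ x, A.act 1 x = x) ∧
  (∀ (g h : ↥H) (x), A.act (g * h) x = A.act g (A.act h x)) ∧
  (∀ (h : ↥H) (x), A.pi (A.act h x) = dot Mf (h : G) (A.pi x)) ∧
  (∀ x, ((A.pi x).1 : Set G) = stabSet Mf A x)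

/-- `f` is a morphism of elements of `T^M_H`: an `H`-equivariant map with
`π₀(x) = res_{H_x}^{H_{f(x)}}(π(f x))`. -/
def IsMor (A B : PreElt Mf H) (f : A.J → B.J) : Prop :=
  (∀ (h : ↥H) (x), f (A.act h x) = B.act h (f x)) ∧
  (∀ x, ∃ hle : (A.pi x).1 ≤ (B.pi (f x)).1,
    (A.pi x).2 = Mf.res hle ((B.pi (f x)).2))

/-- Two elements of `T^M_H` are isomorphic: there are mutually inverse morphisms
between them. -/
def EltIso (A B : PreElt Mf H) : Prop :=
  ∃ (f : A.J → B.J) (f' : B.J → A.J),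
    (∀ x, f' (f x) = x) ∧ (∀ y, f (f' y) = y) ∧ IsMor Mf A B f ∧ IsMor Mf B A f'

/-- The transitive element `(H/K, π_s)` of `T^M_H`. -/
abbrev transPre [Finite G] (K : Subgroup G) (hK : K ≤ H) (s : Mf.M K) : PreElt Mf H where
  J := ↥H ⧸ K.subgroupOf H
  fin := inferInstance
  act h q := h • q
  pi q := dot Mf ((Quotient.out q : ↥H) : G) ⟨K, s⟩

theorem transPre_isElt [Finite G] (K : Subgroup G) (hK : K ≤ H) (s : Mf.M K) :
    IsElt Mf (transPre Mf K hK s) := by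
  have key : ∀ a b : ↥H,
      (QuotientGroup.mk a : ↥H ⧸ K.subgroupOf H) = QuotientGroup.mk b →
      dot Mf (a : G) ⟨K, s⟩ = dot Mf (b : G) ⟨K, s⟩ := by
    intro a b hab
    have h1 : a⁻¹ * b ∈ K.subgroupOf H := QuotientGroup.eq.mp hab
    rw [Subgroup.mem_subgroupOf] at h1
    have h3 : (b : G) = (a : G) * ((a⁻¹ * b : ↥H) : G) := by push_cast; group
    rw [h3, ← dot_mul,
      show dot Mf ((a⁻¹ * b : ↥H) : G) (⟨K, s⟩ : Sig Mf) = ⟨K, s⟩ from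
        Mf.con_id K _ h1 s]
  refine ⟨fun x => one_smul _ x, fun g h x => mul_smul g h x, ?_, ?_⟩
  · intro h q
    show dot Mf ((Quotient.out (h • q) : ↥H) : G) ⟨K, s⟩
        = dot Mf (h : G) (dot Mf ((Quotient.out q : ↥H) : G) ⟨K, s⟩)
    rw [dot_mul,
      show ((h : G) * ((Quotient.out q : ↥H) : G)) = ((h * Quotient.out q : ↥H) : G)
        from rfl]
    apply key
    rw [QuotientGroup.out_eq']
    conv_lhs => rw [← QuotientGroup.out_eq' q]
    rfl
  · intro q
    show (conjS ((Quotient.out q : ↥H) : G) K : Set G)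
        = stabSet Mf (transPre Mf K hK s) q
    ext g
    constructor
    · intro hg
      have hgH : g ∈ H := conjS_le hK (Quotient.out q).2 hg
      refine ⟨hgH, ?_⟩
      show (⟨g, hgH⟩ : ↥H) • q = q
      conv_lhs => rw [← QuotientGroup.out_eq' q]
      show QuotientGroup.mk ((⟨g, hgH⟩ : ↥H) * Quotient.out q) = q
      conv_rhs => rw [← QuotientGroup.out_eq' q]
      rw [QuotientGroup.eq]
      rw [Subgroup.mem_subgroupOf]
      have h5 : ((Quotient.out q : ↥H) : G)⁻¹ * g * ((Quotient.out q : ↥H) : G) ∈ K :=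
        mem_conjS.mp hg
      have h6 := K.inv_mem h5
      convert h6 using 1
      push_cast
      group
    · rintro ⟨hgH, hfix⟩
      have h7 : (⟨g, hgH⟩ : ↥H) • q = q := hfix
      have h8 : (QuotientGroup.mk ((⟨g, hgH⟩ : ↥H) * Quotient.out q)
          : ↥H ⧸ K.subgroupOf H) = QuotientGroup.mk (Quotient.out q) := by
        rw [QuotientGroup.out_eq']
        conv_lhs => rw [show (QuotientGroup.mk ((⟨g, hgH⟩ : ↥H) * Quotient.out q)
          : ↥H ⧸ K.subgroupOf H) = (⟨g, hgH⟩ : ↥H) • q from by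
            conv_rhs => rw [← QuotientGroup.out_eq' q]
            rfl]
        exact h7
      have h9 := QuotientGroup.eq.mp h8
      rw [Subgroup.mem_subgroupOf] at h9
      have h10 := K.inv_mem h9
      rw [SetLike.mem_coe, mem_conjS]
      convert h10 using 1
      push_cast
      group

/-- The disjoint union of two pre-elements. -/
abbrev disjPre (A B : PreElt Mf H) : PreElt Mf H where
  J := A.J ⊕ B.J
  fin := by have := A.fin; have := B.fin; exact inferInstance
  act h := Sum.map (A.act h) (B.act h)
  pi := Sum.elim A.pi B.pi

theorem disjPre_isElt {A B : PreElt Mf H} (hA : IsElt Mf A) (hB : IsElt Mf B) :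
    IsElt Mf (disjPre Mf A B) := by
  refine ⟨?_, ?_, ?_, ?_⟩
  · rintro (x | x) <;> simp [hA.1, hB.1]
  · intro g h
    rintro (x | x) <;> simp [hA.2.1, hB.2.1]
  · intro h
    rintro (x | x) <;> simp [hA.2.2.1, hB.2.2.1]
  · rintro (x | x)
    · rw [show (disjPre Mf A B).pi (Sum.inl x) = A.pi x from rfl, hA.2.2.2 x]
      ext g
      simp only [stabSet, Set.mem_setOf_eq]
      constructor
      · rintro ⟨hg, hx⟩
        exact ⟨hg, by simp [hx]⟩
      · rintro ⟨hg, hx⟩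
        refine ⟨hg, ?_⟩
        simpa using hx
    · rw [show (disjPre Mf A B).pi (Sum.inr x) = B.pi x from rfl, hB.2.2.2 x]
      ext g
      simp only [stabSet, Set.mem_setOf_eq]
      constructor
      · rintro ⟨hg, hx⟩
        exact ⟨hg, by simp [hx]⟩
      · rintro ⟨hg, hx⟩
        refine ⟨hg, ?_⟩
        simpa using hx

/-- The elements of `T^M_H`. -/
def EltT (Mf : MonoidFunctor G) (H : Subgroup G) := {A : PreElt Mf H // IsElt Mf A}

/-- The isomorphism relation on elements of `T^M_H`. -/
def isoRel (A B : EltT Mf H) : Prop := EltIso Mf A.1 B.1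

/-- The isomorphism classes `[J, π]` of elements of `T^M_H`. -/
def Cl (Mf : MonoidFunctor G) (H : Subgroup G) := Quot (isoRel Mf (H := H))

/-- The `M`-Burnside ring `Ω(H,M)` as an additive group: the free abelian group on the
isomorphism classes of elements of `T^M_H`, with `[J₁ ⊔ J₂, π₁ ⊔ π₂] = [J₁,π₁] + [J₂,π₂]`. -/
def OmegaGr (Mf : MonoidFunctor G) (H : Subgroup G) :=
  (Cl Mf H →₀ ℤ) ⧸ AddSubgroup.closure
    {z | ∃ A B : EltT Mf H, z =
      Finsupp.single (Quot.mk _ (⟨disjPre Mf A.1 B.1, disjPre_isElt Mf A.2 B.2⟩ : EltT Mf H)) 1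
      - Finsupp.single (Quot.mk _ A) 1 - Finsupp.single (Quot.mk _ B) 1}

instance : AddCommGroup (OmegaGr Mf H) :=
  QuotientAddGroup.Quotient.addCommGroup _

/-- The class `[(H/K)_s] ∈ Ω(H,M)` indexed by `(K,s) ∈ R(H,M)`. -/
def transCls [Finite G] (R : Reps Mf H) (k : ↥R.R) : OmegaGr Mf H :=
  QuotientAddGroup.mk (Finsupp.single (Quot.mk _
    (⟨transPre Mf k.1.1 (R.subset k.1 k.2) k.1.2,
      transPre_isElt Mf k.1.1 (R.subset k.1 k.2) k.1.2⟩ : EltT Mf H)) 1)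


section Aux

theorem res_of_eq {K : Subgroup G} (hle : K ≤ K) (s : Mf.M K) : Mf.res hle s = s :=
  Mf.res_self K s

theorem sigma_res_eq {S₁ S₂ : Subgroup G} (hEq : S₁ = S₂) (hle : S₁ ≤ S₂) (s : Mf.M S₂) :
    (⟨S₁, Mf.res hle s⟩ : Sig Mf) = ⟨S₂, s⟩ := by
  subst hEq; rw [res_of_eq]

theorem res_of_sig_eq {x y : Sig Mf} (h : x = y) :
    ∃ hle : x.1 ≤ y.1, x.2 = Mf.res hle y.2 := by
  subst h; exact ⟨le_rfl, (Mf.res_self _ _).symm⟩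

theorem eltIso_symm {A B : PreElt Mf H} (h : EltIso Mf A B) : EltIso Mf B A := by
  obtain ⟨f, f', h1, h2, h3, h4⟩ := h
  exact ⟨f', f, h2, h1, h4, h3⟩

theorem isMor_comp {A B C : PreElt Mf H} {f : A.J → B.J} {g : B.J → C.J}
    (hf : IsMor Mf A B f) (hg : IsMor Mf B C g) : IsMor Mf A C (g ∘ f) := by
  refine ⟨fun h x => by simp only [Function.comp_apply, hf.1, hg.1], fun x => ?_⟩
  obtain ⟨le1, e1⟩ := hf.2 x
  obtain ⟨le2, e2⟩ := hg.2 (f x)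
  exact ⟨le1.trans le2, by rw [e1, e2, Mf.res_res]; rfl⟩

theorem eltIso_trans {A B C : PreElt Mf H} (hAB : EltIso Mf A B) (hBC : EltIso Mf B C) :
    EltIso Mf A C := by
  obtain ⟨f, f', h1, h2, h3, h4⟩ := hAB
  obtain ⟨g, g', k1, k2, k3, k4⟩ := hBC
  exact ⟨g ∘ f, f' ∘ g', fun x => by simp [k1, h1], fun y => by simp [h2, k2],
    isMor_comp Mf h3 k3, isMor_comp Mf k4 h4⟩

theorem dot_out_eq (K : Subgroup G) (s : Mf.M K) {a b : ↥H}
    (hab : (QuotientGroup.mk a : ↥H ⧸ K.subgroupOf H) = QuotientGroup.mk b) :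
    dot Mf (a : G) ⟨K, s⟩ = dot Mf (b : G) ⟨K, s⟩ := by
  have h1 : a⁻¹ * b ∈ K.subgroupOf H := QuotientGroup.eq.mp hab
  rw [Subgroup.mem_subgroupOf] at h1
  have h3 : (b : G) = (a : G) * ((a⁻¹ * b : ↥H) : G) := by push_cast; group
  rw [h3, ← dot_mul,
    show dot Mf ((a⁻¹ * b : ↥H) : G) (⟨K, s⟩ : Sig Mf) = ⟨K, s⟩ from Mf.con_id K _ h1 s]

theorem mem_of_conjS_eq {h : G} {U K : Subgroup G} (h1 : conjS h U = K) {x : G}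
    (hx : x ∈ K) : h⁻¹ * x * h ∈ U := by
  subst h1; exact mem_conjS.mp hx

/-- The backward direction of statement 0(i). -/
theorem trans_iso_of_conj [Finite G] {K U : Subgroup G} (hK : K ≤ H) (hU : U ≤ H)
    (s : Mf.M K) (t : Mf.M U) (h : G) (hH : h ∈ H)
    (hd : dot Mf h ⟨U, t⟩ = ⟨K, s⟩) :
    EltIso Mf (transPre Mf K hK s) (transPre Mf U hU t) := by
  have h1 : conjS h U = K := congrArg Sigma.fst hd
  set hh : ↥H := ⟨h, hH⟩ with hhdef
  let f : (↥H ⧸ K.subgroupOf H) → (↥H ⧸ U.subgroupOf H) :=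
    fun q => QuotientGroup.mk (Quotient.out q * hh)
  let f' : (↥H ⧸ U.subgroupOf H) → (↥H ⧸ K.subgroupOf H) :=
    fun q => QuotientGroup.mk (Quotient.out q * hh⁻¹)
  have keyf : ∀ (a : ↥H) (q : ↥H ⧸ K.subgroupOf H), QuotientGroup.mk a = q →
      f q = QuotientGroup.mk (a * hh) := by
    intro a q ha
    have h2 : (QuotientGroup.mk a : ↥H ⧸ K.subgroupOf H) = QuotientGroup.mk (Quotient.out q) := by
      rw [ha, QuotientGroup.out_eq']
    have h3 : a⁻¹ * Quotient.out q ∈ K.subgroupOf H := QuotientGroup.eq.mp h2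
    rw [Subgroup.mem_subgroupOf] at h3
    refine (QuotientGroup.eq.mpr ?_).symm
    rw [Subgroup.mem_subgroupOf]
    have h4 : (((a * hh)⁻¹ * (Quotient.out q * hh) : ↥H) : G)
        = h⁻¹ * ((a⁻¹ * Quotient.out q : ↥H) : G) * h := by
          push_cast; rw [show (hh : G) = h from rfl]; group
    rw [h4]
    exact mem_of_conjS_eq h1 h3
  have keyf' : ∀ (a : ↥H) (q : ↥H ⧸ U.subgroupOf H), QuotientGroup.mk a = q →
      f' q = QuotientGroup.mk (a * hh⁻¹) := by
    intro a q ha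
    have h2 : (QuotientGroup.mk a : ↥H ⧸ U.subgroupOf H) = QuotientGroup.mk (Quotient.out q) := by
      rw [ha, QuotientGroup.out_eq']
    have h3 : a⁻¹ * Quotient.out q ∈ U.subgroupOf H := QuotientGroup.eq.mp h2
    rw [Subgroup.mem_subgroupOf] at h3
    refine (QuotientGroup.eq.mpr ?_).symm
    rw [Subgroup.mem_subgroupOf]
    have h4 : (((a * hh⁻¹)⁻¹ * (Quotient.out q * hh⁻¹) : ↥H) : G)
        = h * ((a⁻¹ * Quotient.out q : ↥H) : G) * h⁻¹ := by
          push_cast; rw [show (hh : G) = h from rfl]; group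
    rw [h4, ← h1]
    rw [mem_conjS]
    convert h3 using 1
    group
  have hcoe : (hh : G) = h := rfl
  have hdinv : dot Mf h⁻¹ (⟨K, s⟩ : Sig Mf) = ⟨U, t⟩ := by
    rw [← hd, dot_mul, inv_mul_cancel, dot_one]
  have hff' : ∀ q, f (f' q) = q := by
    intro q
    rw [keyf (Quotient.out q * hh⁻¹) (f' q) (keyf' (Quotient.out q) q (QuotientGroup.out_eq' q)).symm]
    rw [mul_assoc, inv_mul_cancel, mul_one, QuotientGroup.out_eq']
  have hf'f : ∀ q, f' (f q) = q := by
    intro q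
    rw [keyf' (Quotient.out q * hh) (f q) (keyf (Quotient.out q) q (QuotientGroup.out_eq' q)).symm]
    rw [mul_assoc, mul_inv_cancel, mul_one, QuotientGroup.out_eq']
  have equivf : ∀ (g : ↥H) (q : ↥H ⧸ K.subgroupOf H), f (g • q) = g • f q := by
    intro g q
    have e1 : (QuotientGroup.mk (g * Quotient.out q) : ↥H ⧸ K.subgroupOf H) = g • q := by
      conv_rhs => rw [← QuotientGroup.out_eq' q]
      rfl
    rw [keyf (g * Quotient.out q) (g • q) e1,
      keyf (Quotient.out q) q (QuotientGroup.out_eq' q), mul_assoc]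
    rfl
  have equivf' : ∀ (g : ↥H) (q : ↥H ⧸ U.subgroupOf H), f' (g • q) = g • f' q := by
    intro g q
    have e1 : (QuotientGroup.mk (g * Quotient.out q) : ↥H ⧸ U.subgroupOf H) = g • q := by
      conv_rhs => rw [← QuotientGroup.out_eq' q]
      rfl
    rw [keyf' (g * Quotient.out q) (g • q) e1,
      keyf' (Quotient.out q) q (QuotientGroup.out_eq' q), mul_assoc]
    rfl
  have pif : ∀ q : ↥H ⧸ K.subgroupOf H,
      (transPre Mf K hK s).pi q = (transPre Mf U hU t).pi (f q) := by
    intro q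
    show dot Mf ((Quotient.out q : ↥H) : G) ⟨K, s⟩
        = dot Mf ((Quotient.out (f q) : ↥H) : G) ⟨U, t⟩
    have e2 : (QuotientGroup.mk (Quotient.out (f q)) : ↥H ⧸ U.subgroupOf H)
        = QuotientGroup.mk (Quotient.out q * hh) := by
      rw [QuotientGroup.out_eq', keyf (Quotient.out q) q (QuotientGroup.out_eq' q)]
    rw [dot_out_eq Mf U t e2]
    have e3 : ((Quotient.out q * hh : ↥H) : G) = ((Quotient.out q : ↥H) : G) * h := rfl
    rw [e3, ← dot_mul, hd]
  have pif' : ∀ q : ↥H ⧸ U.subgroupOf H,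
      (transPre Mf U hU t).pi q = (transPre Mf K hK s).pi (f' q) := by
    intro q
    show dot Mf ((Quotient.out q : ↥H) : G) ⟨U, t⟩
        = dot Mf ((Quotient.out (f' q) : ↥H) : G) ⟨K, s⟩
    have e2 : (QuotientGroup.mk (Quotient.out (f' q)) : ↥H ⧸ K.subgroupOf H)
        = QuotientGroup.mk (Quotient.out q * hh⁻¹) := by
      rw [QuotientGroup.out_eq', keyf' (Quotient.out q) q (QuotientGroup.out_eq' q)]
    rw [dot_out_eq Mf K s e2]
    have e3 : ((Quotient.out q * hh⁻¹ : ↥H) : G) = ((Quotient.out q : ↥H) : G) * h⁻¹ := rfl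
    rw [e3, ← dot_mul, hdinv]
  exact ⟨f, f', hf'f, hff', ⟨equivf, fun q => res_of_sig_eq Mf (pif q)⟩,
    ⟨equivf', fun q => res_of_sig_eq Mf (pif' q)⟩⟩

/-- The forward direction of statement 0(i). -/
theorem conj_of_trans_iso [Finite G] {K U : Subgroup G} (hK : K ≤ H) (hU : U ≤ H)
    (s : Mf.M K) (t : Mf.M U)
    (hiso : EltIso Mf (transPre Mf K hK s) (transPre Mf U hU t)) :
    ∃ h ∈ H, dot Mf h ⟨U, t⟩ = ⟨K, s⟩ := by
  obtain ⟨f, f', hf'f, hff', hf, hf'⟩ := hiso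
  set q₀ : ↥H ⧸ K.subgroupOf H := QuotientGroup.mk 1 with hq₀
  set a : ↥H := Quotient.out q₀ with ha
  set b : ↥H := Quotient.out (f q₀) with hb
  obtain ⟨hle1, eq1⟩ := hf.2 q₀
  obtain ⟨hle2, eq2⟩ := hf'.2 (f q₀)
  rw [hf'f q₀] at hle2
  have hEq : ((transPre Mf K hK s).pi q₀).1 = ((transPre Mf U hU t).pi (f q₀)).1 :=
    le_antisymm hle1 hle2
  have e : dot Mf (a : G) ⟨K, s⟩ = dot Mf (b : G) ⟨U, t⟩ := by
    have e2 : (transPre Mf K hK s).pi q₀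
        = ⟨((transPre Mf K hK s).pi q₀).1, Mf.res hle1 ((transPre Mf U hU t).pi (f q₀)).2⟩ := by
      rw [← eq1]
    exact e2.trans (sigma_res_eq Mf hEq hle1 _)
  refine ⟨((a⁻¹ * b : ↥H) : G), (a⁻¹ * b : ↥H).2, ?_⟩
  have e3 : ((a⁻¹ * b : ↥H) : G) = (a : G)⁻¹ * (b : G) := rfl
  rw [e3, ← dot_mul, ← e, dot_mul]
  have e4 : (a : G)⁻¹ * (a : G) = 1 := by group
  rw [e4, dot_one]

end Aux


section Aux2

theorem pi_le {A : PreElt Mf H} (hA : IsElt Mf A) (x : A.J) : (A.pi x).1 ≤ H := by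
  intro g hg
  have h1 : g ∈ stabSet Mf A x := by
    rw [← hA.2.2.2 x]; exact hg
  obtain ⟨hgH, -⟩ := h1
  exact hgH

theorem mem_pi_fst {A : PreElt Mf H} (hA : IsElt Mf A) (x : A.J) (k : ↥H)
    (hk : (k : G) ∈ (A.pi x).1) : A.act k x = x := by
  have h1 : (k : G) ∈ stabSet Mf A x := by
    rw [← hA.2.2.2 x]; exact hk
  obtain ⟨hgH, he⟩ := h1
  rwa [show (⟨(k : G), hgH⟩ : ↥H) = k from Subtype.ext rfl] at he

theorem act_mem_pi_fst {A : PreElt Mf H} (hA : IsElt Mf A) (x : A.J) (k : ↥H)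
    (hk : A.act k x = x) : (k : G) ∈ (A.pi x).1 := by
  have h1 : (k : G) ∈ stabSet Mf A x := ⟨k.2, by rwa [show (⟨(k : G), k.2⟩ : ↥H) = k from Subtype.ext rfl]⟩
  rw [← hA.2.2.2 x] at h1
  exact h1

variable (R : Reps Mf H)

/-- The representative in `R` of the orbit of a pair. -/
def repOf (x : Sig Mf) (hx : x.1 ≤ H) : ↥R.R :=
  ⟨(R.complete x hx).exists.choose, (R.complete x hx).exists.choose_spec.1⟩

theorem repOf_spec (x : Sig Mf) (hx : x.1 ≤ H) :
    ∃ h ∈ H, dot Mf h x = (repOf Mf R x hx).1 :=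
  (R.complete x hx).exists.choose_spec.2

theorem repOf_unique (x : Sig Mf) (hx : x.1 ≤ H) {y : Sig Mf} (hyR : y ∈ R.R)
    (hy : ∃ h ∈ H, dot Mf h x = y) : ((repOf Mf R x hx) : Sig Mf) = y := by
  obtain ⟨z, hz, huniq⟩ := R.complete x hx
  have h1 := huniq _ ⟨(repOf Mf R x hx).2, repOf_spec Mf R x hx⟩
  have h2 := huniq y ⟨hyR, hy⟩
  rw [h1, h2]

theorem repOf_congr {x y : Sig Mf} (e : x = y) (hx : x.1 ≤ H) (hy : y.1 ≤ H) :
    repOf Mf R x hx = repOf Mf R y hy := by subst e; rfl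

theorem repOf_dot (x : Sig Mf) (hx : x.1 ≤ H) (h : G) (hH : h ∈ H)
    (hx' : (dot Mf h x).1 ≤ H) : repOf Mf R (dot Mf h x) hx' = repOf Mf R x hx := by
  apply Subtype.ext
  apply repOf_unique Mf R _ _ (repOf Mf R x hx).2
  obtain ⟨h₀, h₀H, hd⟩ := repOf_spec Mf R x hx
  refine ⟨h₀ * h⁻¹, H.mul_mem h₀H (H.inv_mem hH), ?_⟩
  rw [dot_mul, inv_mul_cancel_right, hd]

theorem repOf_self (k : ↥R.R) (hk : (k : Sig Mf).1 ≤ H) : repOf Mf R (k : Sig Mf) hk = k := by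
  apply Subtype.ext
  exact repOf_unique Mf R _ _ k.2 ⟨1, H.one_mem, dot_one Mf _⟩

/-- The restriction of a pre-element to an invariant subset. -/
def restrPre (A : PreElt Mf H) (S : Set A.J)
    (hS : ∀ (h : ↥H) (x), x ∈ S → A.act h x ∈ S) : PreElt Mf H where
  J := ↥S
  fin := by have := A.fin; exact Subtype.finite
  act h x := ⟨A.act h x.1, hS h x.1 x.2⟩
  pi x := A.pi x.1

theorem restrPre_isElt {A : PreElt Mf H} (hA : IsElt Mf A) (S : Set A.J)
    (hS : ∀ (h : ↥H) (x), x ∈ S → A.act h x ∈ S) : IsElt Mf (restrPre Mf A S hS) := by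
  refine ⟨fun x => Subtype.ext (hA.1 x.1), fun g h x => Subtype.ext (hA.2.1 g h x.1),
    fun h x => hA.2.2.1 h x.1, ?_⟩
  intro x
  have e1 : (restrPre Mf A S hS).pi x = A.pi x.1 := rfl
  rw [e1, hA.2.2.2 x.1]
  ext g
  simp only [stabSet, Set.mem_setOf_eq]
  constructor
  · rintro ⟨hg, he⟩
    exact ⟨hg, Subtype.ext he⟩
  · rintro ⟨hg, he⟩
    exact ⟨hg, congrArg Subtype.val he⟩

theorem act_inv {A : PreElt Mf H} (hA : IsElt Mf A) (h : ↥H) (x : A.J) :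
    A.act h⁻¹ (A.act h x) = x := by
  rw [← hA.2.1, inv_mul_cancel, hA.1]

theorem compl_invariant {A : PreElt Mf H} (hA : IsElt Mf A) (S : Set A.J)
    (hS : ∀ (h : ↥H) (x), x ∈ S → A.act h x ∈ S) :
    ∀ (h : ↥H) (x), x ∈ Sᶜ → A.act h x ∈ Sᶜ := by
  intro h x hx hmem
  exact hx (by simpa [act_inv Mf hA] using hS h⁻¹ _ hmem)

/-- The decomposition of an element along an invariant subset. -/
theorem decomp_iso {A : PreElt Mf H} (hA : IsElt Mf A) (S : Set A.J)
    (hS : ∀ (h : ↥H) (x), x ∈ S → A.act h x ∈ S) :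
    EltIso Mf A (disjPre Mf (restrPre Mf A S hS)
      (restrPre Mf A Sᶜ (compl_invariant Mf hA S hS))) := by
  classical
  set B := restrPre Mf A S hS
  set C := restrPre Mf A Sᶜ (compl_invariant Mf hA S hS)
  let f : A.J → B.J ⊕ C.J := fun x => if hx : x ∈ S then Sum.inl ⟨x, hx⟩ else Sum.inr ⟨x, hx⟩
  let f' : B.J ⊕ C.J → A.J := Sum.elim Subtype.val Subtype.val
  have hf'f : ∀ x, f' (f x) = x := by
    intro x
    by_cases hx : x ∈ S <;> simp [f, f', hx] <;> rfl
  have hff' : ∀ y, f (f' y) = y := by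
    rintro (⟨y, hy⟩ | ⟨y, hy⟩)
    · exact dif_pos hy
    · have hy' : y ∉ S := hy
      exact dif_neg hy'
  have hpi : ∀ x, (disjPre Mf B C).pi (f x) = A.pi x := by
    intro x
    by_cases hx : x ∈ S <;> simp [f, hx] <;> rfl
  have hequiv : ∀ (h : ↥H) (x), f (A.act h x) = (disjPre Mf B C).act h (f x) := by
    intro h x
    by_cases hx : x ∈ S
    · have h1 : A.act h x ∈ S := hS h x hx
      simp only [f, dif_pos hx, dif_pos h1]
      rfl
    · have h1 : A.act h x ∉ S := compl_invariant Mf hA S hS h x hx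
      simp only [f, dif_neg hx, dif_neg h1]
      rfl
  have hequiv' : ∀ (h : ↥H) (y), f' ((disjPre Mf B C).act h y) = A.act h (f' y) := by
    rintro h (y | y) <;> rfl
  refine ⟨f, f', hf'f, hff', ⟨hequiv, fun x => res_of_sig_eq Mf (hpi x).symm⟩,
    ⟨hequiv', fun y => ?_⟩⟩
  have e1 : (disjPre Mf B C).pi y = A.pi (f' y) := by rcases y with y | y <;> rfl
  exact res_of_sig_eq Mf e1

/-- The orbit of a point is an invariant subset. -/
theorem orbit_invariant {A : PreElt Mf H} (hA : IsElt Mf A) (x : A.J) :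
    ∀ (h : ↥H) (y), y ∈ {y | ∃ k : ↥H, A.act k x = y} → A.act h y ∈ {y | ∃ k : ↥H, A.act k x = y} := by
  rintro h y ⟨k, rfl⟩
  exact ⟨h * k, hA.2.1 h k x⟩

/-- The restriction to an orbit is isomorphic to a transitive element. -/
theorem orbit_iso_trans [Finite G] {A : PreElt Mf H} (hA : IsElt Mf A) (x : A.J) :
    EltIso Mf (transPre Mf (A.pi x).1 (pi_le Mf hA x) (A.pi x).2)
      (restrPre Mf A {y | ∃ k : ↥H, A.act k x = y} (orbit_invariant Mf hA x)) := by
  set K := (A.pi x).1 with hKdef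
  set S := {y | ∃ k : ↥H, A.act k x = y}
  set B := restrPre Mf A S (orbit_invariant Mf hA x)
  have key2 : ∀ (a b : ↥H), A.act a x = A.act b x →
      (QuotientGroup.mk a : ↥H ⧸ K.subgroupOf H) = QuotientGroup.mk b := by
    intro a b hab
    refine QuotientGroup.eq.mpr ?_
    rw [Subgroup.mem_subgroupOf]
    apply act_mem_pi_fst Mf hA
    rw [hA.2.1, ← hab, ← hA.2.1, inv_mul_cancel, hA.1]
  have key : ∀ (a : ↥H) (q : ↥H ⧸ K.subgroupOf H), QuotientGroup.mk a = q →
      A.act (Quotient.out q) x = A.act a x := by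
    intro a q ha
    have h2 : (QuotientGroup.mk a : ↥H ⧸ K.subgroupOf H) = QuotientGroup.mk (Quotient.out q) := by
      rw [ha, QuotientGroup.out_eq']
    have h3 : a⁻¹ * Quotient.out q ∈ K.subgroupOf H := QuotientGroup.eq.mp h2
    rw [Subgroup.mem_subgroupOf] at h3
    have h4 : A.act (a⁻¹ * Quotient.out q) x = x := mem_pi_fst Mf hA x _ h3
    calc A.act (Quotient.out q) x = A.act (a * (a⁻¹ * Quotient.out q)) x := by
          rw [mul_inv_cancel_left]
      _ = A.act a (A.act (a⁻¹ * Quotient.out q) x) := hA.2.1 _ _ _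
      _ = A.act a x := by rw [h4]
  let g : (↥H ⧸ K.subgroupOf H) → B.J := fun q => ⟨A.act (Quotient.out q) x, ⟨_, rfl⟩⟩
  let g' : B.J → (↥H ⧸ K.subgroupOf H) := fun y => QuotientGroup.mk y.2.choose
  have hg'g : ∀ q, g' (g q) = q := by
    intro q
    have h5 : A.act ((g q).2.choose) x = A.act (Quotient.out q) x := (g q).2.choose_spec
    rw [show g' (g q) = QuotientGroup.mk (g q).2.choose from rfl, key2 _ _ h5,
      QuotientGroup.out_eq']
  have hgg' : ∀ y, g (g' y) = y := by
    intro y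
    apply Subtype.ext
    show A.act (Quotient.out (QuotientGroup.mk y.2.choose)) x = y.1
    rw [key y.2.choose _ rfl, y.2.choose_spec]
  have hequiv : ∀ (h : ↥H) (q), g (h • q) = B.act h (g q) := by
    intro h q
    apply Subtype.ext
    show A.act (Quotient.out (h • q)) x = A.act h (A.act (Quotient.out q) x)
    have e1 : (QuotientGroup.mk (h * Quotient.out q) : ↥H ⧸ K.subgroupOf H) = h • q := by
      conv_rhs => rw [← QuotientGroup.out_eq' q]
      rfl
    rw [key _ _ e1, hA.2.1]
  have hequiv' : ∀ (h : ↥H) (y), g' (B.act h y) = h • g' y := by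
    intro h y
    have h6 : A.act ((B.act h y).2.choose) x = A.act (h * y.2.choose) x := by
      rw [(B.act h y).2.choose_spec, hA.2.1, y.2.choose_spec]
      rfl
    rw [show g' (B.act h y) = QuotientGroup.mk (B.act h y).2.choose from rfl, key2 _ _ h6]
    conv_rhs => rw [show g' y = QuotientGroup.mk y.2.choose from rfl]
    rfl
  have hpi : ∀ q, (transPre Mf K (pi_le Mf hA x) (A.pi x).2).pi q = B.pi (g q) := by
    intro q
    show dot Mf ((Quotient.out q : ↥H) : G) ⟨K, (A.pi x).2⟩ = A.pi (A.act (Quotient.out q) x)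
    rw [hA.2.2.1]
  have hpi' : ∀ y, B.pi y = (transPre Mf K (pi_le Mf hA x) (A.pi x).2).pi (g' y) := by
    intro y
    show A.pi y.1 = dot Mf ((Quotient.out (QuotientGroup.mk y.2.choose) : ↥H) : G)
      ⟨K, (A.pi x).2⟩
    rw [dot_out_eq Mf K _ (QuotientGroup.out_eq' _)]
    rw [show (⟨K, (A.pi x).2⟩ : Sig Mf) = A.pi x from rfl, ← hA.2.2.1, y.2.choose_spec]
  exact ⟨g, g', hg'g, hgg', ⟨hequiv, fun q => res_of_sig_eq Mf (hpi q)⟩,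
    ⟨hequiv', fun y => res_of_sig_eq Mf (hpi' y)⟩⟩

end Aux2


section Aux3

theorem pi_eq_of_iso {A B : PreElt Mf H} {f : A.J → B.J} {f' : B.J → A.J}
    (hf : IsMor Mf A B f) (hf' : IsMor Mf B A f') (hf'f : ∀ x, f' (f x) = x) (x : A.J) :
    A.pi x = B.pi (f x) := by
  obtain ⟨hle1, eq1⟩ := hf.2 x
  obtain ⟨hle2, eq2⟩ := hf'.2 (f x)
  rw [hf'f x] at hle2
  have hEq : (A.pi x).1 = (B.pi (f x)).1 := le_antisymm hle1 hle2
  have e2 : A.pi x = ⟨(A.pi x).1, Mf.res hle1 (B.pi (f x)).2⟩ := by rw [← eq1]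
  exact e2.trans (sigma_res_eq Mf hEq hle1 _)

variable (R : Reps Mf H)

/-- The total multiplicity vector of an element of `T^M_H`: for each representative the
number of points of `J` lying in orbits marked with that representative. -/
def weight (A : PreElt Mf H) (hA : IsElt Mf A) : ↥R.R →₀ ℤ :=
  ∑ᶠ x : A.J, Finsupp.single (repOf Mf R (A.pi x) (pi_le Mf hA x)) 1

theorem weight_iso {A B : PreElt Mf H} (hA : IsElt Mf A) (hB : IsElt Mf B)
    (h : EltIso Mf A B) : weight Mf R A hA = weight Mf R B hB := by
  obtain ⟨f, f', h1, h2, h3, h4⟩ := h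
  have := A.fin; have := B.fin
  letI : Fintype A.J := Fintype.ofFinite _
  letI : Fintype B.J := Fintype.ofFinite _
  unfold weight
  rw [finsum_eq_sum_of_fintype, finsum_eq_sum_of_fintype]
  refine Fintype.sum_bijective f (Function.bijective_iff_has_inverse.mpr ⟨f', h1, h2⟩) _ _ ?_
  intro x
  rw [repOf_congr Mf R (pi_eq_of_iso Mf h3 h4 h1 x) (pi_le Mf hA x) (pi_le Mf hB (f x))]

theorem weight_disj {A B : PreElt Mf H} (hA : IsElt Mf A) (hB : IsElt Mf B) :
    weight Mf R (disjPre Mf A B) (disjPre_isElt Mf hA hB)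
      = weight Mf R A hA + weight Mf R B hB := by
  have := A.fin; have := B.fin
  letI : Fintype A.J := Fintype.ofFinite _
  letI : Fintype B.J := Fintype.ofFinite _
  unfold weight
  rw [finsum_eq_sum_of_fintype, finsum_eq_sum_of_fintype, finsum_eq_sum_of_fintype,
    Fintype.sum_sum_type]
  exact congrArg₂ (· + ·) (Finset.sum_congr rfl fun a _ => rfl)
    (Finset.sum_congr rfl fun b _ => rfl)

/-- The index `|H : K|` as an integer. -/
def idx (k : ↥R.R) : ℤ := (Nat.card (↥H ⧸ (k : Sig Mf).1.subgroupOf H) : ℤ)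

theorem idx_ne_zero [Finite G] (k : ↥R.R) : idx Mf R k ≠ 0 := by
  unfold idx
  have h1 : 0 < Nat.card (↥H ⧸ (k : Sig Mf).1.subgroupOf H) := Nat.card_pos
  exact_mod_cast h1.ne'

theorem weight_trans [Finite G] (k : ↥R.R) (hle : (k : Sig Mf).1 ≤ H) :
    weight Mf R (transPre Mf (k : Sig Mf).1 hle (k : Sig Mf).2)
      (transPre_isElt Mf _ hle _) = Finsupp.single k (idx Mf R k) := by
  unfold weight
  letI : Fintype (↥H ⧸ (k : Sig Mf).1.subgroupOf H) := Fintype.ofFinite _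
  rw [finsum_eq_sum_of_fintype]
  have hterm : ∀ q : ↥H ⧸ (k : Sig Mf).1.subgroupOf H,
      Finsupp.single (repOf Mf R ((transPre Mf (k : Sig Mf).1 hle (k : Sig Mf).2).pi q)
        (pi_le Mf (transPre_isElt Mf _ hle _) q)) (1 : ℤ) = Finsupp.single k 1 := by
    intro q
    congr 1
    have e1 : (transPre Mf (k : Sig Mf).1 hle (k : Sig Mf).2).pi q
        = dot Mf ((Quotient.out q : ↥H) : G) (k : Sig Mf) := rfl
    rw [repOf_congr Mf R e1 _ (by
      intro g hg
      exact conjS_le hle (Quotient.out q).2 hg)]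
    rw [repOf_dot Mf R (k : Sig Mf) (R.subset k.1 k.2) _ (Quotient.out q).2]
    exact repOf_self Mf R k _
  rw [Finset.sum_congr rfl (fun q _ => hterm q), Finset.sum_const, Finset.card_univ]
  rw [Finsupp.smul_single]
  congr 1
  unfold idx
  rw [Nat.card_eq_fintype_card]
  simp

theorem li_single_c {ι : Type*} (c : ι → ℤ) (hc : ∀ i, c i ≠ 0) :
    LinearIndependent ℤ (fun i => Finsupp.single i (c i) : ι → (ι →₀ ℤ)) := by
  rw [linearIndependent_iff']
  intro t l hsum i hit
  have h1 : (∑ j ∈ t, l j • Finsupp.single j (c j)) i = 0 := by rw [hsum]; rfl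
  rw [show ((∑ j ∈ t, l j • Finsupp.single j (c j)) i)
      = ∑ j ∈ t, (l j • Finsupp.single j (c j)) i from
    map_sum (Finsupp.applyAddHom (M := ℤ) i) _ t] at h1
  rw [Finset.sum_eq_single_of_mem i hit (fun b _ hbi => by
    rw [Finsupp.smul_apply, Finsupp.single_eq_of_ne' hbi, smul_zero])] at h1
  rw [Finsupp.smul_apply, Finsupp.single_eq_same, smul_eq_mul] at h1
  exact (mul_eq_zero.mp h1).resolve_right (hc i)

/-- The mark-type homomorphism on the free group on the classes. -/
def PhiL : (Cl Mf H →₀ ℤ) →ₗ[ℤ] (↥R.R →₀ ℤ) :=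
  Finsupp.linearCombination ℤ (Quot.lift (fun A : EltT Mf H => weight Mf R A.1 A.2)
    (fun A B h => weight_iso Mf R A.2 B.2 h))

theorem PhiL_single (A : EltT Mf H) :
    PhiL Mf R (Finsupp.single (Quot.mk _ A) 1) = weight Mf R A.1 A.2 := by
  unfold PhiL
  exact (Finsupp.linearCombination_single (c := (1 : ℤ)) (a := Quot.mk (isoRel Mf) A)).trans
    (one_smul ℤ _)

theorem PhiL_vanish : ∀ z ∈ AddSubgroup.closure
    {z | ∃ A B : EltT Mf H, z =
      Finsupp.single (Quot.mk _ (⟨disjPre Mf A.1 B.1, disjPre_isElt Mf A.2 B.2⟩ : EltT Mf H)) 1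
      - Finsupp.single (Quot.mk _ A) 1 - Finsupp.single (Quot.mk _ B) 1},
    PhiL Mf R z = 0 := by
  intro z hz
  induction hz using AddSubgroup.closure_induction with
  | mem z hz =>
    obtain ⟨A, B, rfl⟩ := hz
    erw [map_sub, map_sub, PhiL_single, PhiL_single, PhiL_single, weight_disj Mf R A.2 B.2]
    abel
  | zero => exact map_zero _
  | add a b ha hb iha ihb => rw [map_add, iha, ihb, add_zero]
  | neg a ha iha => rw [map_neg, iha, neg_zero]

/-- The mark-type homomorphism on `Ω(H,M)`. -/
def PhiO : OmegaGr Mf H →+ (↥R.R →₀ ℤ) :=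
  QuotientAddGroup.lift _ (PhiL Mf R).toAddMonoidHom (PhiL_vanish Mf R)

theorem PhiO_transCls [Finite G] (k : ↥R.R) :
    PhiO Mf R (transCls Mf R k) = Finsupp.single k (idx Mf R k) := by
  have h0 : PhiO Mf R (transCls Mf R k) = PhiL Mf R (Finsupp.single (Quot.mk _
      (⟨transPre Mf (k : Sig Mf).1 (R.subset k.1 k.2) (k : Sig Mf).2,
        transPre_isElt Mf (k : Sig Mf).1 (R.subset k.1 k.2) (k : Sig Mf).2⟩ : EltT Mf H)) 1) := rfl
  erw [h0, PhiL_single, weight_trans Mf R k (R.subset k.1 k.2)]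

theorem transCls_li [Finite G] : LinearIndependent ℤ (transCls Mf R) := by
  apply LinearIndependent.of_comp (PhiO Mf R).toIntLinearMap
  have he : (⇑(PhiO Mf R).toIntLinearMap ∘ transCls Mf R)
      = fun k => Finsupp.single k (idx Mf R k) := by
    funext k
    exact PhiO_transCls Mf R k
  rw [he]
  exact li_single_c _ (idx_ne_zero Mf R)

end Aux3


section Aux4

variable [Finite G]

/-- The defining relation of `Ω(H,M)` as an identity between classes. -/
theorem omega_disj_eq (A B : EltT Mf H) :
    (QuotientAddGroup.mk (Finsupp.single (Quot.mk _
        (⟨disjPre Mf A.1 B.1, disjPre_isElt Mf A.2 B.2⟩ : EltT Mf H)) 1) : OmegaGr Mf H)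
      = QuotientAddGroup.mk (Finsupp.single (Quot.mk _ A) 1 : Cl Mf H →₀ ℤ)
        + QuotientAddGroup.mk (Finsupp.single (Quot.mk _ B) 1 : Cl Mf H →₀ ℤ) := by
  erw [← QuotientAddGroup.mk_add, QuotientAddGroup.eq]
  have e1 : -(Finsupp.single (Quot.mk (isoRel Mf)
        (⟨disjPre Mf A.1 B.1, disjPre_isElt Mf A.2 B.2⟩ : EltT Mf H)) (1 : ℤ))
      + (Finsupp.single (Quot.mk (isoRel Mf) A) (1 : ℤ)
        + Finsupp.single (Quot.mk (isoRel Mf) B) (1 : ℤ))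
      = -((Finsupp.single (Quot.mk (isoRel Mf)
          (⟨disjPre Mf A.1 B.1, disjPre_isElt Mf A.2 B.2⟩ : EltT Mf H)) (1 : ℤ))
        - Finsupp.single (Quot.mk (isoRel Mf) A) (1 : ℤ)
        - Finsupp.single (Quot.mk (isoRel Mf) B) (1 : ℤ)) := by abel
  erw [e1]
  exact AddSubgroup.neg_mem _ (AddSubgroup.subset_closure ⟨A, B, rfl⟩)

theorem omega_empty (A : EltT Mf H) (hE : IsEmpty A.1.J) :
    (QuotientAddGroup.mk (Finsupp.single (Quot.mk (isoRel Mf) A) 1) : OmegaGr Mf H) = 0 := by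
  have hiso : isoRel Mf (⟨disjPre Mf A.1 A.1, disjPre_isElt Mf A.2 A.2⟩ : EltT Mf H) A := by
    refine ⟨Sum.elim id id, fun x => (hE.elim x), ?_, fun x => (hE.elim x), ⟨?_, ?_⟩, ⟨?_, ?_⟩⟩
    · rintro (x | x) <;> exact (hE.elim x)
    · rintro h (x | x) <;> exact (hE.elim x)
    · rintro (x | x) <;> exact (hE.elim x)
    · intro h x; exact (hE.elim x)
    · intro x; exact (hE.elim x)
  have e0 : Quot.mk (isoRel Mf) (⟨disjPre Mf A.1 A.1, disjPre_isElt Mf A.2 A.2⟩ : EltT Mf H)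
      = Quot.mk (isoRel Mf) A := Quot.sound hiso
  rw [QuotientAddGroup.eq_zero_iff]
  have h1 : (Finsupp.single (Quot.mk (isoRel Mf)
        (⟨disjPre Mf A.1 A.1, disjPre_isElt Mf A.2 A.2⟩ : EltT Mf H)) (1 : ℤ))
      - Finsupp.single (Quot.mk (isoRel Mf) A) 1 - Finsupp.single (Quot.mk (isoRel Mf) A) 1
      ∈ AddSubgroup.closure {z | ∃ A B : EltT Mf H, z =
        Finsupp.single (Quot.mk _ (⟨disjPre Mf A.1 B.1, disjPre_isElt Mf A.2 B.2⟩ : EltT Mf H)) 1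
        - Finsupp.single (Quot.mk _ A) 1 - Finsupp.single (Quot.mk _ B) 1} :=
    AddSubgroup.subset_closure ⟨A, A, rfl⟩
  rw [e0] at h1
  have h2 := AddSubgroup.neg_mem _ h1
  have e2 : -((Finsupp.single (Quot.mk (isoRel Mf) A) (1 : ℤ))
      - Finsupp.single (Quot.mk (isoRel Mf) A) 1 - Finsupp.single (Quot.mk (isoRel Mf) A) 1)
      = Finsupp.single (Quot.mk (isoRel Mf) A) 1 := by abel
  rwa [e2] at h2

theorem mem_span_aux (R : Reps Mf H) :
    ∀ (n : ℕ) (A : EltT Mf H), Nat.card A.1.J ≤ n →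
      (QuotientAddGroup.mk (Finsupp.single (Quot.mk (isoRel Mf) A) 1) : OmegaGr Mf H)
        ∈ Submodule.span ℤ (Set.range (transCls Mf R)) := by
  intro n
  induction n with
  | zero =>
    intro A hcard
    have hfin := A.1.fin
    have h0 : Nat.card A.1.J = 0 := Nat.le_zero.mp hcard
    have hE : IsEmpty A.1.J := by
      rcases Nat.card_eq_zero.mp h0 with h | h
      · exact h
      · exact absurd hfin (by rw [← not_finite_iff_infinite] at h; exact h)
    rw [omega_empty Mf A hE]
    exact Submodule.zero_mem _
  | succ n ih =>
    intro A hcard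
    have hfin := A.1.fin
    rcases le_or_gt (Nat.card A.1.J) n with hle | hlt
    · exact ih A hle
    · have hne : Nat.card A.1.J ≠ 0 := by omega
      obtain ⟨⟨x⟩, -⟩ := Nat.card_ne_zero.mp hne
      set S : Set A.1.J := {y | ∃ k : ↥H, A.1.act k x = y} with hSdef
      set B : EltT Mf H := ⟨restrPre Mf A.1 S (orbit_invariant Mf A.2 x),
        restrPre_isElt Mf A.2 S (orbit_invariant Mf A.2 x)⟩ with hBdef
      set C : EltT Mf H := ⟨restrPre Mf A.1 Sᶜ
          (compl_invariant Mf A.2 S (orbit_invariant Mf A.2 x)),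
        restrPre_isElt Mf A.2 Sᶜ (compl_invariant Mf A.2 S (orbit_invariant Mf A.2 x))⟩
        with hCdef
      have e1 : Quot.mk (isoRel Mf) A
          = Quot.mk (isoRel Mf) (⟨disjPre Mf B.1 C.1, disjPre_isElt Mf B.2 C.2⟩ : EltT Mf H) :=
        Quot.sound (decomp_iso Mf A.2 S (orbit_invariant Mf A.2 x))
      rw [e1, omega_disj_eq Mf B C]
      apply Submodule.add_mem
      · -- the orbit part is a transitive class
        set k : ↥R.R := repOf Mf R (A.1.pi x) (pi_le Mf A.2 x) with hkdef
        obtain ⟨h, hH, hd⟩ := repOf_spec Mf R (A.1.pi x) (pi_le Mf A.2 x)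
        have hiso1 : EltIso Mf (transPre Mf (k : Sig Mf).1 (R.subset k.1 k.2) (k : Sig Mf).2)
            (transPre Mf (A.1.pi x).1 (pi_le Mf A.2 x) (A.1.pi x).2) :=
          trans_iso_of_conj Mf (R.subset k.1 k.2) (pi_le Mf A.2 x) _ _ h hH hd
        have hiso2 : EltIso Mf (transPre Mf (A.1.pi x).1 (pi_le Mf A.2 x) (A.1.pi x).2) B.1 :=
          orbit_iso_trans Mf A.2 x
        have e2 : Quot.mk (isoRel Mf)
            (⟨transPre Mf (k : Sig Mf).1 (R.subset k.1 k.2) (k : Sig Mf).2,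
              transPre_isElt Mf (k : Sig Mf).1 (R.subset k.1 k.2) (k : Sig Mf).2⟩ : EltT Mf H)
            = Quot.mk (isoRel Mf) B := Quot.sound (eltIso_trans Mf hiso1 hiso2)
        have e3 : transCls Mf R k
            = (QuotientAddGroup.mk (Finsupp.single (Quot.mk (isoRel Mf) B) 1) : OmegaGr Mf H) := by
          unfold transCls
          rw [e2]
        rw [← e3]
        exact (Submodule.subset_span ⟨k, rfl⟩ :
          transCls Mf R k ∈ Submodule.span ℤ (Set.range (transCls Mf R)))
      · -- the complement is smaller
        apply ih
        have hxS : x ∈ S := ⟨1, A.2.1 x⟩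
        have hcards : Nat.card C.1.J = Set.ncard Sᶜ := Nat.card_coe_set_eq Sᶜ
        have hlt2 : Set.ncard Sᶜ < Nat.card A.1.J := by
          rw [← Set.ncard_univ]
          apply Set.ncard_lt_ncard
          · constructor
            · exact Set.subset_univ _
            · intro hsub
              exact (hsub (Set.mem_univ x)) hxS
          · exact Set.finite_univ
        omega

theorem span_transCls_top (R : Reps Mf H) :
    Submodule.span ℤ (Set.range (transCls Mf R)) = ⊤ := by
  rw [eq_top_iff]
  rintro y -
  obtain ⟨f, rfl⟩ := QuotientAddGroup.mk_surjective y
  induction f using Finsupp.induction_linear with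
  | zero =>
    rw [show (QuotientAddGroup.mk (0 : Cl Mf H →₀ ℤ) : OmegaGr Mf H) = 0 from rfl]
    exact Submodule.zero_mem _
  | add f g hf hg =>
    rw [QuotientAddGroup.mk_add]
    exact Submodule.add_mem _ hf hg
  | single a b =>
    obtain ⟨A, rfl⟩ := Quot.exists_rep a
    have e1 : Finsupp.single (Quot.mk (isoRel Mf) A) b
        = b • Finsupp.single (Quot.mk (isoRel Mf) A) (1 : ℤ) := by
      rw [Finsupp.smul_single, smul_eq_mul, mul_one]
    have e2 : (QuotientAddGroup.mk (b • Finsupp.single (Quot.mk (isoRel Mf) A) (1 : ℤ))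
        : OmegaGr Mf H)
        = b • (QuotientAddGroup.mk (Finsupp.single (Quot.mk (isoRel Mf) A) (1 : ℤ))
          : OmegaGr Mf H) :=
      map_zsmul (QuotientAddGroup.mk' _) b _
    erw [e1, e2]
    exact Submodule.smul_mem _ b (mem_span_aux Mf R (Nat.card A.1.J) A le_rfl)

end Aux4

/-- For `(K,s), (U,t) ∈ S(H,M)`, the elements `(H/K, π_s)` and
`(H/U, π_t)` of `T^M_H` are isomorphic if and only if `(K,s) = h.(U,t)` for some
`h ∈ H`; consequently the classes `[(H/K)_s]` for `(K,s) ∈ R(H,M)` form a `ℤ`-basis of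
the `M`-Burnside ring `Ω(H,M)`. -/
theorem trans_iso_iff_and_basis [Finite G] :
    (∀ (K U : Subgroup G) (hK : K ≤ H) (hU : U ≤ H) (s : Mf.M K) (t : Mf.M U),
      EltIso Mf (transPre Mf K hK s) (transPre Mf U hU t) ↔
        ∃ h ∈ H, dot Mf h ⟨U, t⟩ = ⟨K, s⟩) ∧
    (∀ R : Reps Mf H,
      LinearIndependent ℤ (transCls Mf R) ∧
      Submodule.span ℤ (Set.range (transCls Mf R)) = ⊤) := by
  constructor
  · intro K U hK hU s t
    exact ⟨conj_of_trans_iso Mf hK hU s t,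
      fun ⟨h, hH, hd⟩ => trans_iso_of_conj Mf hK hU s t h hH hd⟩
  · intro R
    exact ⟨transCls_li Mf R, span_transCls_top Mf R⟩

end
end LB
end

section
/- Let G be a finite group, M a monoid functor for G, and H ≤ G. In the M-Burnside ring Ω(H,M), multiplication satisfies [(H/K)_s]·[(H/U)_t] = Σ_{KhU ∈ K\H/U} [(H/(K ∩ ʰU))_{res_{K∩ʰU}^K(s) · res_{K∩ʰU}^{ʰU}(ʰt)}] for all (K,s),(U,t) ∈ S(H,M), where the sum runs over the (K,U)-double cosets in H. -/
set_option linter.unusedSectionVars false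
set_option linter.unusedVariables false

open scoped Classical

namespace LB
universe u v

noncomputable section

variable {G : Type u} [Group G] (Mf : MonoidFunctor G) {H : Subgroup G}

/-- The product element `(J₁ × J₂, π₁·π₂)` of two elements of `T^M_H`, where
`(π₁·π₂)(x₁,x₂) = res(π₁(x₁))·res(π₂(x₂)) ∈ M(H_{x₁} ∩ H_{x₂})`. -/
abbrev prodPre (A B : PreElt Mf H) : PreElt Mf H where
  J := A.J × B.J
  fin := by have := A.fin; have := B.fin; exact inferInstance
  act h x := (A.act h x.1, B.act h x.2)
  pi x := ⟨(A.pi x.1).1 ⊓ (B.pi x.2).1,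
    Mf.res inf_le_left ((A.pi x.1).2) * Mf.res inf_le_right ((B.pi x.2).2)⟩

/-- A finite disjoint union of pre-elements. -/
abbrev unionPre (ι : Type u) (hι : Finite ι) (f : ι → PreElt Mf H) : PreElt Mf H where
  J := Σ i, (f i).J
  fin := by
    letI := hι
    haveI : ∀ i, Finite (f i).J := fun i => (f i).fin
    exact inferInstance
  act h x := ⟨x.1, (f x.1).act h x.2⟩
  pi x := (f x.1).pi x.2


theorem conjS_inf (g : G) (P Q : Subgroup G) :
    conjS g (P ⊓ Q) = conjS g P ⊓ conjS g Q := by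
  ext x
  simp only [Subgroup.mem_inf, mem_conjS]

/-- The product operation on pairs `(K, s)`. -/
def pairProd (x y : Sig Mf) : Sig Mf :=
  ⟨x.1 ⊓ y.1, Mf.res inf_le_left x.2 * Mf.res inf_le_right y.2⟩

theorem sigma_res_mul_congr {P Q A B : Subgroup G} (e : P = Q)
    (hPA : P ≤ A) (hPB : P ≤ B) (hQA : Q ≤ A) (hQB : Q ≤ B)
    (a : Mf.M A) (b : Mf.M B) :
    (⟨P, Mf.res hPA a * Mf.res hPB b⟩ : Sig Mf) = ⟨Q, Mf.res hQA a * Mf.res hQB b⟩ := by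
  subst e; rfl

theorem dot_pairProd (g : G) (x y : Sig Mf) :
    dot Mf g (pairProd Mf x y) = pairProd Mf (dot Mf g x) (dot Mf g y) := by
  obtain ⟨P, a⟩ := x; obtain ⟨Q, b⟩ := y
  unfold pairProd dot
  dsimp only
  rw [map_mul, Mf.con_res, Mf.con_res]
  exact sigma_res_mul_congr Mf (conjS_inf g P Q) _ _ _ _ _ _

theorem sig_mor {a b : Sig Mf} (h : a = b) :
    ∃ hle : a.1 ≤ b.1, a.2 = Mf.res hle b.2 := by
  subst h
  exact ⟨le_rfl, (Mf.res_self a.1 a.2).symm⟩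

theorem dot_mk_eq {K : Subgroup G} {c a : ↥H}
    (h : (QuotientGroup.mk c : ↥H ⧸ K.subgroupOf H) = QuotientGroup.mk a) (s : Mf.M K) :
    dot Mf (c : G) ⟨K, s⟩ = dot Mf (a : G) ⟨K, s⟩ := by
  have hm : ((c⁻¹ * a : ↥H) : G) ∈ K := Subgroup.mem_subgroupOf.mp (QuotientGroup.eq.mp h)
  have h1 : dot Mf ((c⁻¹ * a : ↥H) : G) ⟨K, s⟩ = (⟨K, s⟩ : Sig Mf) := Mf.con_id K _ hm s
  calc dot Mf (c : G) (⟨K, s⟩ : Sig Mf)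
      = dot Mf (c : G) (dot Mf ((c⁻¹ * a : ↥H) : G) ⟨K, s⟩) := by rw [h1]
    _ = dot Mf ((c : G) * ((c⁻¹ * a : ↥H) : G)) ⟨K, s⟩ := dot_mul Mf _ _ _
    _ = dot Mf (a : G) ⟨K, s⟩ := by push_cast; rw [mul_inv_cancel_left]

theorem eltIso_of_equiv (A B : PreElt Mf H) (F : B.J → A.J)
    (hbij : Function.Bijective F)
    (hequiv : ∀ (g : ↥H) (x : B.J), F (B.act g x) = A.act g (F x))
    (hpi : ∀ x : B.J, B.pi x = A.pi (F x)) : EltIso Mf A B := by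
  let e := Equiv.ofBijective F hbij
  have hFe : ∀ z, F (e.symm z) = z := fun z => e.apply_symm_apply z
  refine ⟨e.symm, F, fun x => hFe x, fun y => e.symm_apply_apply y, ⟨?_, ?_⟩, ⟨?_, ?_⟩⟩
  · intro h x
    apply hbij.1
    calc F (e.symm (A.act h x)) = A.act h x := hFe _
      _ = A.act h (F (e.symm x)) := by rw [hFe]
      _ = F (B.act h (e.symm x)) := (hequiv h _).symm
  · intro x
    have h2 := hpi (e.symm x)
    rw [hFe] at h2
    exact sig_mor Mf h2.symm
  · exact hequiv
  · exact fun x => sig_mor Mf (hpi x)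

/-- In the `M`-Burnside ring `Ω(H,M)`, multiplication (induced by the
cartesian product of elements of `T^M_H`) satisfies
`[(H/K)_s]·[(H/U)_t] = Σ_{KhU ∈ K\H/U} [(H/(K ∩ ʰU))_{res(s)·res(ʰt)}]`:
the product element `(H/K)_s × (H/U)_t` is isomorphic (as an element of `T^M_H`) to the
disjoint union, over the `(K,U)`-double cosets `KhU` of `H`, of the transitive elements
`(H/(K ∩ ʰU))_{res_{K∩ʰU}^K(s) · res_{K∩ʰU}^{ʰU}(ʰt)}`. -/
theorem prod_trans_iso_union [Finite G]
    (K U : Subgroup G) (hK : K ≤ H) (hU : U ≤ H) (s : Mf.M K) (t : Mf.M U) :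
    EltIso Mf (prodPre Mf (transPre Mf K hK s) (transPre Mf U hU t))
      (unionPre Mf
        (DoubleCoset.Quotient (↑(K.subgroupOf H) : Set ↥H) (↑(U.subgroupOf H) : Set ↥H))
        (by unfold DoubleCoset.Quotient; infer_instance)
        (fun q =>
          transPre Mf (K ⊓ conjS ((Quotient.out q : ↥H) : G) U)
            (inf_le_left.trans hK)
            (Mf.res inf_le_left s *
              Mf.res inf_le_right
                (Mf.con ((Quotient.out q : ↥H) : G) U t)))) := by
  classical
  have keyU : ∀ (h m : ↥H), ((m : ↥H) : G) ∈ conjS ((h : ↥H) : G) U →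
      h⁻¹ * m * h ∈ U.subgroupOf H := by
    intro h m hm
    rw [mem_conjS] at hm
    rw [Subgroup.mem_subgroupOf]
    push_cast
    exact hm
  refine eltIso_of_equiv Mf _ _
    (fun x => (QuotientGroup.mk (Quotient.out x.2),
      QuotientGroup.mk (Quotient.out x.2 * Quotient.out x.1))) ⟨?_, ?_⟩ ?_ ?_
  · -- injectivity
    rintro ⟨q, y⟩ ⟨q', y'⟩ hxy
    simp only [Prod.mk.injEq] at hxy
    obtain ⟨h1, h2⟩ := hxy
    have hk : (Quotient.out y)⁻¹ * Quotient.out y' ∈ K.subgroupOf H := QuotientGroup.eq.mp h1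
    have hu : (Quotient.out y * Quotient.out q)⁻¹ * (Quotient.out y' * Quotient.out q')
        ∈ U.subgroupOf H := QuotientGroup.eq.mp h2
    have hq : q = q' := by
      rw [← DoubleCoset.out_eq' (K.subgroupOf H) (U.subgroupOf H) q,
        ← DoubleCoset.out_eq' (K.subgroupOf H) (U.subgroupOf H) q', DoubleCoset.eq]
      refine ⟨((Quotient.out y)⁻¹ * Quotient.out y')⁻¹, inv_mem hk,
        (Quotient.out y * Quotient.out q)⁻¹ * (Quotient.out y' * Quotient.out q'), hu, ?_⟩
      group
    subst hq
    have hmem : (Quotient.out y)⁻¹ * Quotient.out y'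
        ∈ (K ⊓ conjS ((Quotient.out q : ↥H) : G) U).subgroupOf H := by
      rw [Subgroup.mem_subgroupOf, Subgroup.mem_inf]
      refine ⟨Subgroup.mem_subgroupOf.mp hk, ?_⟩
      rw [mem_conjS]
      have h3 : (Quotient.out q : ↥H)⁻¹ * ((Quotient.out y)⁻¹ * Quotient.out y') * Quotient.out q
          = (Quotient.out y * Quotient.out q)⁻¹ * (Quotient.out y' * Quotient.out q) := by
        group
      have h4 := Subgroup.mem_subgroupOf.mp (h3 ▸ hu)
      push_cast at h4
      convert h4 using 1
      simp only [Subgroup.coe_mul, Subgroup.coe_inv]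
    have hy : y = y' := by
      rw [← QuotientGroup.out_eq' y, ← QuotientGroup.out_eq' y']
      exact QuotientGroup.eq.mpr hmem
    rw [hy]
  · -- surjectivity
    rintro ⟨a, b⟩
    obtain ⟨κ, υ, hκ, hυ, hout⟩ := DoubleCoset.mk_out_eq_mul (K.subgroupOf H) (U.subgroupOf H)
      ((Quotient.out a)⁻¹ * Quotient.out b)
    refine ⟨⟨DoubleCoset.mk (K.subgroupOf H) (U.subgroupOf H) ((Quotient.out a)⁻¹ * Quotient.out b),
      QuotientGroup.mk (Quotient.out a * κ⁻¹)⟩, ?_⟩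
    have hD : ∃ D : ↥H, Quotient.out (DoubleCoset.mk (K.subgroupOf H) (U.subgroupOf H)
        ((Quotient.out a)⁻¹ * Quotient.out b)) = D := ⟨_, rfl⟩
    obtain ⟨D, hD⟩ := hD
    rw [hD] at hout
    obtain ⟨m, hm⟩ := QuotientGroup.mk_out_eq_mul
      ((K ⊓ conjS ((Quotient.out (DoubleCoset.mk (K.subgroupOf H) (U.subgroupOf H)
        ((Quotient.out a)⁻¹ * Quotient.out b)) : ↥H) : G) U).subgroupOf H)
      (Quotient.out a * κ⁻¹)
    have hmK : (m : ↥H) ∈ K.subgroupOf H := by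
      rw [Subgroup.mem_subgroupOf]
      exact (Subgroup.mem_inf.mp (Subgroup.mem_subgroupOf.mp m.2)).1
    have hmU : D⁻¹ * m * D ∈ U.subgroupOf H := by
      rw [← hD]
      exact keyU _ _ (Subgroup.mem_inf.mp (Subgroup.mem_subgroupOf.mp m.2)).2
    obtain ⟨w, hw⟩ : ∃ w : ↥H, (↑m : ↥H) = w := ⟨_, rfl⟩
    rw [hw] at hm hmK hmU
    refine Prod.ext ?_ ?_
    · show QuotientGroup.mk (Quotient.out (QuotientGroup.mk (Quotient.out a * κ⁻¹))) = a
      rw [hm]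
      have h6 : (QuotientGroup.mk (Quotient.out a * κ⁻¹ * w) : ↥H ⧸ K.subgroupOf H)
          = QuotientGroup.mk (Quotient.out a) := by
        apply QuotientGroup.eq.mpr
        have h7 : (Quotient.out a * κ⁻¹ * w)⁻¹ * Quotient.out a = w⁻¹ * κ := by group
        rw [h7]
        exact mul_mem (inv_mem hmK) hκ
      rw [h6, QuotientGroup.out_eq']
    · show QuotientGroup.mk (Quotient.out (QuotientGroup.mk (Quotient.out a * κ⁻¹)) *
          Quotient.out (DoubleCoset.mk (K.subgroupOf H) (U.subgroupOf H)
            ((Quotient.out a)⁻¹ * Quotient.out b))) = b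
      rw [hm, hD]
      have h6 : (QuotientGroup.mk (Quotient.out a * κ⁻¹ * w * D) : ↥H ⧸ U.subgroupOf H)
          = QuotientGroup.mk (Quotient.out b) := by
        apply QuotientGroup.eq.mpr
        have h7 : (Quotient.out a * κ⁻¹ * w * D)⁻¹ * Quotient.out b
            = (D⁻¹ * w * D)⁻¹ * υ⁻¹ := by
          rw [hout]
          group
        rw [h7]
        exact mul_mem (inv_mem hmU) (inv_mem hυ)
      rw [h6, QuotientGroup.out_eq']
  · -- equivariance
    rintro g ⟨q, y⟩
    show (QuotientGroup.mk (Quotient.out (g • y)),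
        QuotientGroup.mk (Quotient.out (g • y) * Quotient.out q))
      = (g • QuotientGroup.mk (Quotient.out y),
        g • QuotientGroup.mk (Quotient.out y * Quotient.out q))
    have hy : g • y = QuotientGroup.mk (g * Quotient.out y) := by
      conv_lhs => rw [← QuotientGroup.out_eq' y]
      rfl
    rw [hy]
    obtain ⟨m, hm⟩ := QuotientGroup.mk_out_eq_mul
      ((K ⊓ conjS ((Quotient.out q : ↥H) : G) U).subgroupOf H) (g * Quotient.out y)
    have hmK : (m : ↥H) ∈ K.subgroupOf H := by
      rw [Subgroup.mem_subgroupOf]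
      exact (Subgroup.mem_inf.mp (Subgroup.mem_subgroupOf.mp m.2)).1
    have hmU : (Quotient.out q)⁻¹ * m * Quotient.out q ∈ U.subgroupOf H :=
      keyU _ _ (Subgroup.mem_inf.mp (Subgroup.mem_subgroupOf.mp m.2)).2
    rw [hm]
    refine Prod.ext ?_ ?_
    · show QuotientGroup.mk (g * Quotient.out y * m)
        = g • QuotientGroup.mk (Quotient.out y)
      have h5 : (g • (QuotientGroup.mk (Quotient.out y) : ↥H ⧸ K.subgroupOf H))
          = QuotientGroup.mk (g * Quotient.out y) := rfl
      rw [h5]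
      apply QuotientGroup.eq.mpr
      have : (g * Quotient.out y * m)⁻¹ * (g * Quotient.out y) = (↑m)⁻¹ := by group
      rw [this]
      exact inv_mem hmK
    · show QuotientGroup.mk (g * Quotient.out y * m * Quotient.out q)
        = g • QuotientGroup.mk (Quotient.out y * Quotient.out q)
      have h5 : (g • (QuotientGroup.mk (Quotient.out y * Quotient.out q) : ↥H ⧸ U.subgroupOf H))
          = QuotientGroup.mk (g * (Quotient.out y * Quotient.out q)) := rfl
      rw [h5]
      apply QuotientGroup.eq.mpr
      have h8 : (g * Quotient.out y * m * Quotient.out q)⁻¹ * (g * (Quotient.out y * Quotient.out q))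
          = ((Quotient.out q)⁻¹ * m * Quotient.out q)⁻¹ := by group
      rw [h8]
      exact inv_mem hmU
  · -- pi condition
    rintro ⟨q, y⟩
    show dot Mf ((Quotient.out y : ↥H) : G)
        (pairProd Mf ⟨K, s⟩ (dot Mf ((Quotient.out q : ↥H) : G) ⟨U, t⟩))
      = pairProd Mf
          (dot Mf ((Quotient.out (QuotientGroup.mk (Quotient.out y)
            : ↥H ⧸ K.subgroupOf H) : ↥H) : G) ⟨K, s⟩)
          (dot Mf ((Quotient.out (QuotientGroup.mk (Quotient.out y * Quotient.out q)
            : ↥H ⧸ U.subgroupOf H) : ↥H) : G) ⟨U, t⟩)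
    rw [dot_mk_eq Mf (QuotientGroup.out_eq' _) s,
      dot_mk_eq Mf (QuotientGroup.out_eq' _) t, dot_pairProd, dot_mul]
    push_cast
    rfl


end
end LB
end

section
/- Let G be a finite group, M a monoid functor for G, and H ≤ G. Then Ω̃(H,M) = ⊕_{(U,t)∈R(H,M)} (1/|W_H(U,t)|)·φ_H([(H/U)_t])·Z; that is, the elements (1/|W_H(U,t)|)φ_H([(H/U)_t]) for (U,t) ∈ R(H,M) lie in Ω̃(H,M) and form a free Z-basis of it. -/
set_option linter.unusedSectionVars false
set_option linter.unusedVariables false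

open scoped Classical

namespace LB
noncomputable section

variable {G : Type*} [Group G]

variable (Mf : MonoidFunctor G)

variable {H : Subgroup G}

section AuxBasis

theorem card_conjS' (g : G) (K : Subgroup G) : Nat.card (conjS g K) = Nat.card K :=
  (Nat.card_congr (K.equivMapOfInjective ((MulAut.conj g).toMonoidHom)
    (MulAut.conj g).injective).toEquiv).symm

theorem sig_eq_of_res (x : Sig Mf) {U : Subgroup G} (e : U = x.1) (hle : U ≤ x.1) {t : Mf.M U}
    (ht : t = Mf.res hle x.2) : (⟨U, t⟩ : Sig Mf) = x := by
  subst e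
  have h2 : Mf.res hle x.2 = x.2 := Mf.res_self x.1 x.2
  rw [ht, h2]

theorem pred_congr {x y : Sig Mf} (e : x = y) (u : Sig Mf) :
    (∃ hle : u.1 ≤ x.1, u.2 = Mf.res hle x.2) ↔ ∃ hle : u.1 ≤ y.1, u.2 = Mf.res hle y.2 := by
  subst e; rfl

theorem dot_eq_self {x : Sig Mf} {h : G} (hh : h ∈ x.1) : dot Mf h x = x :=
  Mf.con_id x.1 h hh x.2

theorem mem_NGpair {x : Sig Mf} {g : G} :
    g ∈ NGpair Mf H x ↔ g ∈ H ∧ dot Mf g x = x := Iff.rfl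

theorem card_invariant {Γ : Type*} [Group Γ] (S : Subgroup Γ) (P : Γ → Prop)
    (hP : ∀ (h s : Γ), s ∈ S → (P (h * s) ↔ P h)) :
    Nat.card {h : Γ // P h}
      = Nat.card {q : Γ ⧸ S // ∃ h : Γ, QuotientGroup.mk h = q ∧ P h} * Nat.card S := by
  rw [← Nat.card_prod]
  apply Nat.card_congr
  refine ⟨fun h => ⟨⟨QuotientGroup.mk h.1, h.1, rfl, h.2⟩,
      ⟨(QuotientGroup.mk h.1 : Γ ⧸ S).out⁻¹ * h.1, ?_⟩⟩,
    fun p => ⟨p.1.1.out * p.2.1, ?_⟩, ?_, ?_⟩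
  · rw [← QuotientGroup.eq, QuotientGroup.out_eq']
  · obtain ⟨h0, hq, hP0⟩ := p.1.2
    have h1 : h0⁻¹ * p.1.1.out ∈ S := by
      rw [← QuotientGroup.eq, hq, QuotientGroup.out_eq']
    have h2 : P p.1.1.out := by
      have h3 := hP h0 (h0⁻¹ * p.1.1.out) h1
      rw [mul_inv_cancel_left] at h3
      exact h3.mpr hP0
    exact (hP _ _ p.2.2).mpr h2
  · intro h
    apply Subtype.ext
    simp
  · intro p
    have hq : QuotientGroup.mk (p.1.1.out * p.2.1) = p.1.1 := by
      rw [QuotientGroup.mk_mul_of_mem _ p.2.2, QuotientGroup.out_eq']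
    refine Prod.ext (Subtype.ext hq) (Subtype.ext ?_)
    show (QuotientGroup.mk (p.1.1.out * p.2.1) : Γ ⧸ S).out⁻¹ * (p.1.1.out * p.2.1) = p.2.1
    rw [hq, inv_mul_cancel_left]

variable [Finite G]

theorem Pk_card {k u : Sig Mf} {S : Subgroup ↥H}
    (hS : ∀ s : ↥H, s ∈ S → dot Mf (↑s : G) k = k) :
    Nat.card {h : ↥H // ∃ hle : u.1 ≤ (dot Mf (↑h : G) k).1, u.2 = Mf.res hle (dot Mf (↑h : G) k).2}
      = Nat.card {q : ↥H ⧸ S // ∃ h : ↥H, QuotientGroup.mk h = q ∧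
          ∃ hle : u.1 ≤ (dot Mf (↑h : G) k).1, u.2 = Mf.res hle (dot Mf (↑h : G) k).2}
        * Nat.card S := by
  apply card_invariant
  intro h s hs
  have e : dot Mf (↑(h * s) : G) k = dot Mf (↑h : G) k := by
    have h1 : (↑(h * s) : G) = (↑h : G) * (↑s : G) := rfl
    rw [h1, ← dot_mul, hS s hs]
  exact pred_congr Mf e u

theorem invCount_card (k u : Sig Mf) (hkH : k.1 ≤ H) :
    Nat.card {h : ↥H // ∃ hle : u.1 ≤ (dot Mf (↑h : G) k).1,
        u.2 = Mf.res hle (dot Mf (↑h : G) k).2}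
      = invCount Mf H k u * Nat.card k.1 := by
  have hS : ∀ s : ↥H, s ∈ k.1.subgroupOf H → dot Mf (↑s : G) k = k := fun s hs =>
    dot_eq_self Mf (Subgroup.mem_subgroupOf.mp hs)
  rw [Pk_card Mf hS]
  congr 1
  exact Nat.card_congr (Subgroup.subgroupOfEquivOfLe hkH).toEquiv

theorem WCard_mul (k : Sig Mf) (hkH : k.1 ≤ H) :
    WCard Mf H k * Nat.card k.1 = Nat.card (NGpair Mf H k) := by
  have hKN : k.1 ≤ NGpair Mf H k := fun g hg => ⟨hkH hg, dot_eq_self Mf hg⟩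
  have h1 := Subgroup.index_mul_card (k.1.subgroupOf (NGpair Mf H k))
  rw [Nat.card_congr (Subgroup.subgroupOfEquivOfLe hKN).toEquiv] at h1
  exact h1

theorem WCard_ne_zero (k : Sig Mf) : WCard Mf H k ≠ 0 :=
  Subgroup.index_ne_zero_of_finite

theorem cardK_ne_zero (K : Subgroup G) : Nat.card K ≠ 0 :=
  Nat.card_pos.ne'

theorem invCount_dvd (k u : Sig Mf) (hkH : k.1 ≤ H) :
    WCard Mf H k ∣ invCount Mf H k u := by
  have hNH : NGpair Mf H k ≤ H := fun g hg => hg.1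
  have hS : ∀ s : ↥H, s ∈ (NGpair Mf H k).subgroupOf H → dot Mf (↑s : G) k = k := fun s hs =>
    (Subgroup.mem_subgroupOf.mp hs).2
  have h1 := Pk_card Mf (u := u) hS
  rw [Nat.card_congr (Subgroup.subgroupOfEquivOfLe hNH).toEquiv, invCount_card Mf k u hkH,
    ← WCard_mul Mf k hkH, ← mul_assoc] at h1
  have h3 : invCount Mf H k u
      = Nat.card {q : ↥H ⧸ (NGpair Mf H k).subgroupOf H // ∃ h : ↥H, QuotientGroup.mk h = q ∧
          ∃ hle : u.1 ≤ (dot Mf (↑h : G) k).1, u.2 = Mf.res hle (dot Mf (↑h : G) k).2}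
        * WCard Mf H k :=
    Nat.eq_of_mul_eq_mul_right (Nat.pos_of_ne_zero (cardK_ne_zero k.1)) h1
  exact Dvd.intro_left _ h3.symm

theorem invCount_diag (k : Sig Mf) (hkH : k.1 ≤ H) :
    invCount Mf H k k = WCard Mf H k := by
  have hNH : NGpair Mf H k ≤ H := fun g hg => hg.1
  have hiff : ∀ h : ↥H, (∃ hle : k.1 ≤ (dot Mf (↑h : G) k).1,
      k.2 = Mf.res hle (dot Mf (↑h : G) k).2) ↔ (↑h : G) ∈ NGpair Mf H k := by
    intro h
    constructor
    · rintro ⟨hle, ht⟩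
      have hc : Nat.card ((dot Mf (↑h : G) k).1 : Subgroup G) = Nat.card k.1 :=
        card_conjS' (↑h : G) k.1
      have hset : (k.1 : Set G) = ((dot Mf (↑h : G) k).1 : Set G) := by
        apply Set.eq_of_subset_of_ncard_le hle
        rw [← Nat.card_coe_set_eq, ← Nat.card_coe_set_eq]
        exact hc.le
      have e : k.1 = (dot Mf (↑h : G) k).1 := SetLike.coe_injective hset
      exact mem_NGpair Mf |>.mpr ⟨h.2, (sig_eq_of_res Mf _ e hle ht).symm⟩
    · intro hn
      exact (pred_congr Mf (mem_NGpair Mf |>.mp hn).2 k).mpr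
        ⟨le_rfl, (Mf.res_self k.1 k.2).symm⟩
  have e3 : Nat.card {h : ↥H // ∃ hle : k.1 ≤ (dot Mf (↑h : G) k).1,
      k.2 = Mf.res hle (dot Mf (↑h : G) k).2} = Nat.card (NGpair Mf H k) :=
    Nat.card_congr ⟨fun h => ⟨(↑h.1 : G), (hiff h.1).mp h.2⟩,
      fun n => ⟨⟨(↑n : G), hNH n.2⟩, (hiff _).mpr n.2⟩, fun h => rfl, fun n => rfl⟩
  have h2 := invCount_card Mf k k hkH
  rw [e3, ← WCard_mul Mf k hkH] at h2
  exact (Nat.eq_of_mul_eq_mul_right (Nat.pos_of_ne_zero (cardK_ne_zero k.1)) h2.symm)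

theorem invCount_triang (k u : Sig Mf) (hne : invCount Mf H k u ≠ 0) :
    Nat.card u.1 ≤ Nat.card k.1 ∧
      (Nat.card u.1 = Nat.card k.1 → ∃ h ∈ H, dot Mf h k = u) := by
  have hnon : Nonempty {q : ↥H ⧸ k.1.subgroupOf H // ∃ h : ↥H, QuotientGroup.mk h = q ∧
      ∃ hle : u.1 ≤ (dot Mf (↑h : G) k).1, u.2 = Mf.res hle (dot Mf (↑h : G) k).2} :=
    (Nat.card_ne_zero.mp hne).1
  obtain ⟨⟨q, h, -, hle, ht⟩⟩ := hnon
  have hc : Nat.card ((dot Mf (↑h : G) k).1 : Subgroup G) = Nat.card k.1 :=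
    card_conjS' (↑h : G) k.1
  constructor
  · calc Nat.card u.1 ≤ Nat.card ((dot Mf (↑h : G) k).1 : Subgroup G) :=
          Nat.card_le_card_of_injective _ (Subgroup.inclusion_injective hle)
      _ = Nat.card k.1 := hc
  · intro hceq
    have hset : (u.1 : Set G) = ((dot Mf (↑h : G) k).1 : Set G) := by
      apply Set.eq_of_subset_of_ncard_le hle
      rw [← Nat.card_coe_set_eq, ← Nat.card_coe_set_eq]
      exact (hc.trans hceq.symm).le
    have e : u.1 = (dot Mf (↑h : G) k).1 := SetLike.coe_injective hset
    exact ⟨(↑h : G), h.2, (sig_eq_of_res Mf _ e hle ht).symm⟩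

end AuxBasis
/-- `Ω̃(H,M) = ⊕_{(U,t) ∈ R(H,M)} (1/|W_H(U,t)|)·φ_H([(H/U)_t])·ℤ`:
there is a family `b` with `|W_H(U,t)| • b (U,t) = φ_H([(H/U)_t])` which is a free
`ℤ`-basis of `Ω̃(H,M) = ∏_{(K,s) ∈ R(H,M)} ℤ`. -/
theorem ghost_module_basis [Finite G] (hMf : ∀ K : Subgroup G, Finite (Mf.M K))
    (R : Reps Mf H) :
    ∃ b : ↥R.R → (↥R.R → ℤ),
      (∀ k : ↥R.R,
        (WCard Mf H k.1 : ℤ) • b k = fun u => (invCount Mf H k.1 u.1 : ℤ)) ∧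
      LinearIndependent ℤ b ∧
      Submodule.span ℤ (Set.range b) = ⊤ := by
  classical
  haveI : ∀ K : Subgroup G, Finite (Mf.M K) := hMf
  haveI : Finite (Subgroup G) := Finite.of_injective _ SetLike.coe_injective
  haveI : Finite (Sig Mf) := inferInstance
  haveI : Finite ↥R.R := Subtype.finite
  letI : Fintype ↥R.R := Fintype.ofFinite _
  have hsub : ∀ k : ↥R.R, (k : Sig Mf).1 ≤ H := fun k => R.subset _ k.2
  set P : Matrix ↥R.R ↥R.R ℤ := Matrix.of fun iu ik =>
    (invCount Mf H (ik : Sig Mf) (iu : Sig Mf) : ℤ) / (WCard Mf H (ik : Sig Mf) : ℤ) with hP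
  have hWz : ∀ ik : ↥R.R, (WCard Mf H (ik : Sig Mf) : ℤ) ≠ 0 := fun ik =>
    Int.natCast_ne_zero.mpr (WCard_ne_zero Mf _)
  have hPdvd : ∀ iu ik : ↥R.R, (WCard Mf H (ik : Sig Mf) : ℤ) * P iu ik
      = (invCount Mf H (ik : Sig Mf) (iu : Sig Mf) : ℤ) := fun iu ik =>
    Int.mul_ediv_cancel' (Int.natCast_dvd_natCast.mpr (invCount_dvd Mf _ _ (hsub ik)))
  have hPdiag : ∀ ik : ↥R.R, P ik ik = 1 := by
    intro ik
    show ((invCount Mf H (ik : Sig Mf) (ik : Sig Mf) : ℤ))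
        / (WCard Mf H (ik : Sig Mf) : ℤ) = 1
    rw [invCount_diag Mf _ (hsub ik)]
    exact Int.ediv_self (hWz ik)
  have hPzero : ∀ iu ik : ↥R.R, iu ≠ ik →
      ¬ Nat.card (iu : Sig Mf).1 < Nat.card (ik : Sig Mf).1 → P iu ik = 0 := by
    intro iu ik hne hnlt
    by_contra hz
    have hic : invCount Mf H (ik : Sig Mf) (iu : Sig Mf) ≠ 0 := by
      intro h0
      apply hz
      show ((invCount Mf H (ik : Sig Mf) (iu : Sig Mf) : ℤ))
          / (WCard Mf H (ik : Sig Mf) : ℤ) = 0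
      rw [h0]
      simp
    obtain ⟨hle, himp⟩ := invCount_triang Mf _ _ hic
    have hcard : Nat.card (iu : Sig Mf).1 = Nat.card (ik : Sig Mf).1 :=
      le_antisymm hle (not_lt.mp hnlt)
    obtain ⟨h, hH, hd⟩ := himp hcard
    obtain ⟨y, -, hy⟩ := R.complete (ik : Sig Mf) (hsub ik)
    have h1 := hy (iu : Sig Mf) ⟨iu.2, h, hH, hd⟩
    have h2 := hy (ik : Sig Mf) ⟨ik.2, 1, H.one_mem, dot_one Mf _⟩
    exact hne (Subtype.ext (h1.trans h2.symm))
  have hbt : P.BlockTriangular (fun i : ↥R.R => Nat.card (i : Sig Mf).1) := by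
    intro i j hlt
    refine hPzero i j (fun e => ?_) (fun hlt2 => ?_)
    · rw [e] at hlt; exact lt_irrefl _ hlt
    · exact lt_asymm hlt hlt2
  have hblock : ∀ a, P.toSquareBlock (fun i : ↥R.R => Nat.card (i : Sig Mf).1) a = 1 := by
    intro a
    ext i j
    by_cases hij : i = j
    · subst hij
      rw [Matrix.one_apply_eq]
      exact hPdiag i.1
    · rw [Matrix.one_apply_ne hij]
      refine hPzero i.1 j.1 (fun e => hij (Subtype.ext e)) ?_
      have hi := i.2
      have hj := j.2
      rw [hi, hj]
      exact lt_irrefl a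
  have hdet : P.det = 1 := by
    rw [hbt.det]
    refine Finset.prod_eq_one fun a _ => ?_
    rw [hblock a, Matrix.det_one]
  have hInv : Invertible P := P.invertibleOfIsUnitDet (by rw [hdet]; exact isUnit_one)
  let bas := (Pi.basisFun ℤ ↥R.R).map (P.toLinearEquiv' hInv)
  have happ : ∀ v, (P.toLinearEquiv' hInv) v = P.mulVec v := by
    intro v
    rw [← Matrix.toLin'_apply P v, ← Matrix.toLinearEquiv'_apply P hInv]
    rfl
  have hbas : ∀ ik : ↥R.R, ⇑bas ik = fun iu => P iu ik := by
    intro ik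
    show (P.toLinearEquiv' hInv) ((Pi.basisFun ℤ ↥R.R) ik) = _
    rw [Pi.basisFun_apply, happ, Matrix.mulVec_single]
    funext iu
    exact mul_one _
  refine ⟨⇑bas, ?_, bas.linearIndependent, bas.span_eq⟩
  intro k
  funext u
  show (WCard Mf H (k : Sig Mf) : ℤ) * (⇑bas k u) = _
  rw [hbas]
  exact hPdvd u k

end
end LB
end
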